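/- For coprime integers p, q ≥ 2 with p odd and q odd, the (q-1)/2 × (q-1)/2 matrix M with entries M_{i,j} = sin((2i-1)(2j-1)pπ/q) (for 1 ≤ i,j ≤ (q-1)/2) satisfies MᵀM = (q/4)·I; in particular M is invertible. -/

import Mathlib

open Real Matrix

lemma sin_mul_sin' (x y : ℝ) : Real.sin x * Real.sin y = (Real.cos (x-y) - Real.cos (x+y))/2 := by
  have h := Real.cos_sub_cos (x-y) (x+y)
  have h1 : ((x-y)+(x+y))/2 = x := by ring
  have h2 : ((x-y)-(x+y))/2 = -y := by ring
  rw [h1, h2, Real.sin_neg] at h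
  linarith

lemma cos_sum' (q n : ℕ) (hn : q = 2*n+1) (m : ℤ) (hm : ¬ ((q:ℤ) ∣ m)) :
    ∑ i ∈ Finset.range n, Real.cos ((2*(i:ℝ)+1) * (2*(m:ℝ)*Real.pi/(q:ℝ))) = -(1/2) := by
  have hq0 : (0:ℝ) < (q:ℝ) := by exact_mod_cast Nat.pos_of_ne_zero (by omega)
  set φ := 2*(m:ℝ)*Real.pi/(q:ℝ) with hφ
  have hs : Real.sin φ ≠ 0 := by
    intro h
    rw [Real.sin_eq_zero_iff] at h
    obtain ⟨k, hk⟩ := h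
    apply hm
    have h2 := hk
    rw [hφ] at h2
    have hq0' : (q:ℝ) ≠ 0 := ne_of_gt hq0
    field_simp at h2
    have h3 : ((k:ℝ)*q) * Real.pi = (2*(m:ℝ)) * Real.pi := by linear_combination Real.pi * h2
    have h4 : (k:ℝ)*q = 2*m := mul_right_cancel₀ Real.pi_ne_zero h3
    have h5 : (k*q : ℤ) = 2*m := by exact_mod_cast h4
    have h6 : (q:ℤ) ∣ 2*m := ⟨k, by linarith⟩
    have hq2 : IsCoprime (q:ℤ) (2:ℤ) := by
      have hcq : Nat.Coprime q 2 := Nat.coprime_two_right.mpr ⟨n, by omega⟩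
      exact_mod_cast Nat.isCoprime_iff_coprime.mpr hcq
    exact hq2.dvd_of_dvd_mul_left h6
  have term : ∀ i : ℕ, Real.sin (2*((i:ℝ)+1)*φ) - Real.sin (2*(i:ℝ)*φ)
      = 2 * Real.sin φ * Real.cos ((2*(i:ℝ)+1)*φ) := by
    intro i
    rw [Real.sin_sub_sin]
    have e1 : (2*((i:ℝ)+1)*φ - 2*(i:ℝ)*φ)/2 = φ := by ring
    have e2 : (2*((i:ℝ)+1)*φ + 2*(i:ℝ)*φ)/2 = (2*(i:ℝ)+1)*φ := by ring
    rw [e1, e2]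
  have tele := Finset.sum_range_sub (fun i : ℕ => Real.sin (2*(i:ℝ)*φ)) n
  have hsum : 2 * Real.sin φ * (∑ i ∈ Finset.range n, Real.cos ((2*(i:ℝ)+1)*φ))
      = Real.sin (2*(n:ℝ)*φ) := by
    rw [Finset.mul_sum]
    calc ∑ i ∈ Finset.range n, 2 * Real.sin φ * Real.cos ((2*(i:ℝ)+1)*φ)
        = ∑ i ∈ Finset.range n, ((fun i : ℕ => Real.sin (2*(i:ℝ)*φ)) (i+1)
            - (fun i : ℕ => Real.sin (2*(i:ℝ)*φ)) i) := by
          refine Finset.sum_congr rfl fun i _ => ?_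
          simp only []
          rw [← term i]
          push_cast
          ring_nf
      _ = Real.sin (2*(n:ℝ)*φ) := by rw [tele]; simp
  have hqr : (q:ℝ) = 2*(n:ℝ)+1 := by rw [hn]; push_cast; try ring
  have h2n : 2*(n:ℝ)*φ = (m:ℝ)*(2*Real.pi) - φ := by
    rw [hφ, hqr]
    have : (2*(n:ℝ)+1) ≠ 0 := by positivity
    field_simp
    ring
  have hsin2n : Real.sin (2*(n:ℝ)*φ) = - Real.sin φ := by
    rw [h2n, Real.sin_sub, Real.cos_int_mul_two_pi]
    have hz : Real.sin ((m:ℝ)*(2*Real.pi)) = 0 := by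
      rw [show (m:ℝ)*(2*Real.pi) = ((2*m:ℤ):ℝ)*Real.pi by push_cast; ring]
      exact Real.sin_int_mul_pi (2*m)
    rw [hz]
    ring
  rw [hsin2n] at hsum
  have hzero : Real.sin φ * (2 * (∑ i ∈ Finset.range n, Real.cos ((2*(i:ℝ)+1)*φ)) + 1) = 0 := by
    linear_combination hsum
  rcases mul_eq_zero.mp hzero with h | h
  · exact absurd h hs
  · linarith

theorem stmt_0 (p q : ℕ) (hcop : Nat.Coprime p q) (hp : 2 ≤ p) (hpq : p < q)
    (hpo : Odd p) (hqo : Odd q)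
    (M : Matrix (Fin ((q - 1) / 2)) (Fin ((q - 1) / 2)) ℝ)
    (hM : ∀ i j : Fin ((q - 1) / 2),
      M i j = Real.sin ((2 * ((i : ℕ) + 1) - 1 : ℝ) * (2 * ((j : ℕ) + 1) - 1) * p * Real.pi / q)) :
    Mᵀ * M = ((q : ℝ) / 4) • 1 ∧ IsUnit M := by
  obtain ⟨t, ht⟩ := hqo
  have hn : q = 2 * ((q-1)/2) + 1 := by omega
  have hq0 : (0:ℝ) < (q:ℝ) := by exact_mod_cast Nat.pos_of_ne_zero (by omega)
  have hqr : (q:ℝ) = 2*(((q-1)/2 : ℕ):ℝ)+1 := by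
    nth_rewrite 1 [hn]; push_cast; try ring
  have main : Mᵀ * M = ((q : ℝ) / 4) • 1 := by
    ext j k
    have hm₂ : ¬ ((q:ℤ) ∣ ((((j:ℕ):ℤ) + ((k:ℕ):ℤ) + 1) * p)) := by
      intro hdvd
      have hnat : (q:ℤ) ∣ (((j:ℕ) + (k:ℕ) + 1) * p : ℕ) := by
        have he : ((((j:ℕ) + (k:ℕ) + 1) * p : ℕ) : ℤ) = (((j:ℕ):ℤ) + ((k:ℕ):ℤ) + 1) * (p:ℤ) := by
          push_cast; ring
        rw [he]; exact hdvd
      rw [Int.natCast_dvd_natCast] at hnat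
      have hqp : Nat.Coprime q p := hcop.symm
      have hd := hqp.dvd_of_dvd_mul_right hnat
      have hj := j.isLt
      have hk := k.isLt
      have := Nat.le_of_dvd (by omega) hd
      omega
    have step : (Mᵀ * M) j k =
        ((∑ i ∈ Finset.range ((q-1)/2), Real.cos ((2*(i:ℝ)+1)
            * (2*(((((j:ℕ):ℤ) - ((k:ℕ):ℤ)) * p : ℤ):ℝ)*Real.pi/(q:ℝ))))
          - (∑ i ∈ Finset.range ((q-1)/2), Real.cos ((2*(i:ℝ)+1)
            * (2*(((((j:ℕ):ℤ) + ((k:ℕ):ℤ) + 1) * p : ℤ):ℝ)*Real.pi/(q:ℝ)))))/2 := by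
      rw [Matrix.mul_apply]
      have e1 : ∀ i : Fin ((q-1)/2), Mᵀ j i * M i k =
          (Real.cos ((2*(((i:ℕ)):ℝ)+1)
              * (2*(((((j:ℕ):ℤ) - ((k:ℕ):ℤ)) * p : ℤ):ℝ)*Real.pi/(q:ℝ)))
            - Real.cos ((2*(((i:ℕ)):ℝ)+1)
              * (2*(((((j:ℕ):ℤ) + ((k:ℕ):ℤ) + 1) * p : ℤ):ℝ)*Real.pi/(q:ℝ))))/2 := by
        intro i
        simp only [Matrix.transpose_apply]
        rw [hM i j, hM i k, sin_mul_sin']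
        have a1 : (2 * ((i:ℕ) + 1) - 1 : ℝ) * (2 * ((j:ℕ) + 1) - 1) * p * Real.pi / q
            - (2 * ((i:ℕ) + 1) - 1 : ℝ) * (2 * ((k:ℕ) + 1) - 1) * p * Real.pi / q
            = (2*((i:ℕ):ℝ)+1) * (2*(((((j:ℕ):ℤ) - ((k:ℕ):ℤ)) * p : ℤ):ℝ)*Real.pi/(q:ℝ)) := by
          push_cast; try ring
        have a2 : (2 * ((i:ℕ) + 1) - 1 : ℝ) * (2 * ((j:ℕ) + 1) - 1) * p * Real.pi / q
            + (2 * ((i:ℕ) + 1) - 1 : ℝ) * (2 * ((k:ℕ) + 1) - 1) * p * Real.pi / q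
            = (2*((i:ℕ):ℝ)+1) * (2*(((((j:ℕ):ℤ) + ((k:ℕ):ℤ) + 1) * p : ℤ):ℝ)*Real.pi/(q:ℝ)) := by
          push_cast; try ring
        rw [a1, a2]
      calc ∑ i : Fin ((q-1)/2), Mᵀ j i * M i k
          = ∑ i ∈ Finset.range ((q-1)/2), (Real.cos ((2*(i:ℝ)+1)
              * (2*(((((j:ℕ):ℤ) - ((k:ℕ):ℤ)) * p : ℤ):ℝ)*Real.pi/(q:ℝ)))
            - Real.cos ((2*(i:ℝ)+1)
              * (2*(((((j:ℕ):ℤ) + ((k:ℕ):ℤ) + 1) * p : ℤ):ℝ)*Real.pi/(q:ℝ))))/2 := by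
            rw [Finset.sum_congr rfl (fun i _ => e1 i)]
            exact Fin.sum_univ_eq_sum_range (fun i : ℕ => (Real.cos ((2*(i:ℝ)+1)
              * (2*(((((j:ℕ):ℤ) - ((k:ℕ):ℤ)) * p : ℤ):ℝ)*Real.pi/(q:ℝ)))
            - Real.cos ((2*(i:ℝ)+1)
              * (2*(((((j:ℕ):ℤ) + ((k:ℕ):ℤ) + 1) * p : ℤ):ℝ)*Real.pi/(q:ℝ))))/2) ((q-1)/2)
        _ = _ := by rw [← Finset.sum_div, Finset.sum_sub_distrib]
    by_cases hjk : j = k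
    · subst hjk
      have hzero1 : ∑ i ∈ Finset.range ((q-1)/2), Real.cos ((2*(i:ℝ)+1)
          * (2*(((((j:ℕ):ℤ) - ((j:ℕ):ℤ)) * p : ℤ):ℝ)*Real.pi/(q:ℝ))) = (((q-1)/2 : ℕ):ℝ) := by
        have hz : (((((j:ℕ):ℤ) - ((j:ℕ):ℤ)) * p : ℤ):ℝ) = 0 := by push_cast; try ring
        simp [hz]
      rw [step, hzero1, cos_sum' q ((q-1)/2) hn _ hm₂]
      rw [Matrix.smul_apply, Matrix.one_apply_eq, smul_eq_mul, mul_one, hqr]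
      ring
    · have hm₁ : ¬ ((q:ℤ) ∣ ((((j:ℕ):ℤ) - ((k:ℕ):ℤ)) * p)) := by
        intro hdvd
        have hqp : IsCoprime (q:ℤ) (p:ℤ) := by
          exact_mod_cast Nat.isCoprime_iff_coprime.mpr hcop.symm
        have hd2 : (q:ℤ) ∣ (((j:ℕ):ℤ) - ((k:ℕ):ℤ)) := hqp.dvd_of_dvd_mul_right hdvd
        have hj := j.isLt
        have hk := k.isLt
        have hne : ((j:ℕ):ℤ) - ((k:ℕ):ℤ) ≠ 0 := by
          intro h0
          exact hjk (Fin.ext (by omega))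
        have hle := Int.le_of_dvd (abs_pos.mpr hne) ((dvd_abs _ _).mpr hd2)
        rcases abs_cases (((j:ℕ):ℤ) - ((k:ℕ):ℤ)) with ⟨h1, _⟩ | ⟨h1, _⟩ <;> omega
      rw [step, cos_sum' q ((q-1)/2) hn _ hm₁, cos_sum' q ((q-1)/2) hn _ hm₂]
      rw [Matrix.smul_apply, Matrix.one_apply_ne hjk, smul_eq_mul, mul_zero]
      ring
  refine ⟨main, ?_⟩
  have hdet := congrArg Matrix.det main
  rw [Matrix.det_mul, Matrix.det_transpose, Matrix.det_smul, Matrix.det_one, mul_one] at hdet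
  have hne : ((q:ℝ)/4) ^ (Fintype.card (Fin ((q-1)/2))) ≠ 0 := pow_ne_zero _ (by positivity)
  have hdM : M.det ≠ 0 := by
    intro h
    rw [h, mul_zero] at hdet
    exact hne hdet.symm
  exact (Matrix.isUnit_iff_isUnit_det M).mpr (isUnit_iff_ne_zero.mpr hdM)
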